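/- Let m > 1 be an integer, 𝐧 a strictly increasing partition, and j ∈ supp_m(𝐧). Then, for each choice of sign ±: τ^±_𝐧(j) ∈ supp_{m±1}(𝐧^±(j)); supp_{m±1}(𝐧^±(j)) is the disjoint union of supp_{m±1}(𝐧) and {τ^±_𝐧(j)}; supp_m(𝐧^±(j)) = supp_m(𝐧) \ {j}; and τ^∓ computed in the partition 𝐧^±(j) satisfies τ^∓_{𝐧^±(j)}(τ^±_𝐧(j)) = j. -/

import Mathlib

/-- The position function of a strictly increasing partition (represented by its
finite support `S ⊆ ℤ`): `ι_S(j_s) = s` (1-based). -/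
def iotaF (S : Finset ℤ) (x : ℤ) : ℕ := (S.filter (fun y => y ≤ x)).card

/-- `σ⁺_S(j)`: the largest `j' ∈ S` with `j' ≥ j` such that `j'' - j < 2(ι(j'') - ι(j))`
for all `j'' ∈ S` with `j < j'' ≤ j'`. -/
def sigmaP (S : Finset ℤ) (j : ℤ) : ℤ :=
  WithBot.unbotD j (Finset.max (S.filter (fun j' => j ≤ j' ∧
    ∀ j'' ∈ S, j < j'' → j'' ≤ j' →
      j'' - j < 2 * ((iotaF S j'' : ℤ) - (iotaF S j : ℤ)))))

/-- `σ⁻_S(j)`: the smallest `j' ∈ S` with `j' ≤ j` such that `j - j'' < 2(ι(j) - ι(j''))`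
for all `j'' ∈ S` with `j' ≤ j'' < j`. -/
def sigmaM (S : Finset ℤ) (j : ℤ) : ℤ :=
  WithTop.untopD j (Finset.min (S.filter (fun j' => j' ≤ j ∧
    ∀ j'' ∈ S, j' ≤ j'' → j'' < j →
      j - j'' < 2 * ((iotaF S j : ℤ) - (iotaF S j'' : ℤ)))))

/-- `τ⁺_S(j) = j + 2(ι(σ⁺(j)) - ι(j)) + 1`. -/
def tauP (S : Finset ℤ) (j : ℤ) : ℤ :=
  j + 2 * ((iotaF S (sigmaP S j) : ℤ) - (iotaF S j : ℤ)) + 1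

/-- `τ⁻_S(j) = j + 2(ι(σ⁻(j)) - ι(j)) - 1`. -/
def tauM (S : Finset ℤ) (j : ℤ) : ℤ :=
  j + 2 * ((iotaF S (sigmaM S j) : ℤ) - (iotaF S j : ℤ)) - 1

/-- The set of integers between `a` and `b` inclusive, regardless of order. -/
noncomputable def itv (a b : ℤ) : Finset ℤ := Finset.Icc (min a b) (max a b)

/-- The symmetric difference `(S \ T) ∪ (T \ S)`. -/
def symmd (S T : Finset ℤ) : Finset ℤ := (S \ T) ∪ (T \ S)

/-- `supp_m(S) = { j ∈ S : 2 ι_S(j) = j - m }`. -/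
def suppm (m : ℤ) (S : Finset ℤ) : Finset ℤ :=
  S.filter (fun j => 2 * (iotaF S j : ℤ) = j - m)

/-- `𝐧⁺(j) = 𝐧_{[j, τ⁺(j)]}`. -/
noncomputable def opP (S : Finset ℤ) (j : ℤ) : Finset ℤ := symmd S (itv j (tauP S j))

/-- `𝐧⁻(j) = 𝐧_{[j, τ⁻(j)]}`. -/
noncomputable def opM (S : Finset ℤ) (j : ℤ) : Finset ℤ := symmd S (itv j (tauM S j))

namespace SuppAux

/-- The "defect" walk `d(x) = x - 2 ι(x)`. -/
def dd (S : Finset ℤ) (x : ℤ) : ℤ := x - 2 * (iotaF S x : ℤ)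

lemma iota_step (S : Finset ℤ) (x : ℤ) :
    iotaF S x = iotaF S (x - 1) + (if x ∈ S then 1 else 0) := by
  unfold iotaF
  by_cases h : x ∈ S
  · have he : S.filter (fun y => y ≤ x) = insert x (S.filter (fun y => y ≤ x - 1)) := by
      ext y
      simp only [Finset.mem_insert, Finset.mem_filter]
      constructor
      · rintro ⟨hy, hyx⟩
        rcases eq_or_lt_of_le hyx with h1 | h1
        · exact Or.inl h1
        · exact Or.inr ⟨hy, by omega⟩
      · rintro (rfl | ⟨hy, hyx⟩)
        · exact ⟨h, le_refl _⟩
        · exact ⟨hy, by omega⟩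
    rw [if_pos h, he, Finset.card_insert_of_notMem (by simp)]
  · rw [if_neg h, add_zero]
    congr 1
    ext y
    simp only [Finset.mem_filter]
    constructor
    · rintro ⟨hy, hyx⟩
      refine ⟨hy, ?_⟩
      rcases eq_or_lt_of_le hyx with h1 | h1
      · exact absurd (h1 ▸ hy) h
      · omega
    · rintro ⟨hy, hyx⟩
      exact ⟨hy, by omega⟩

lemma dd_step_mem {S : Finset ℤ} {x : ℤ} (h : x ∈ S) : dd S x = dd S (x - 1) - 1 := by
  unfold dd; rw [iota_step S x, if_pos h]; push_cast; ring

lemma dd_step_not_mem {S : Finset ℤ} {x : ℤ} (h : x ∉ S) : dd S x = dd S (x - 1) + 1 := by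
  unfold dd; rw [iota_step S x, if_neg h]; push_cast; ring

lemma dd_le_self (S : Finset ℤ) (x : ℤ) : dd S x ≤ x := by
  unfold dd; have : (0 : ℤ) ≤ (iotaF S x : ℤ) := Int.ofNat_nonneg _; omega

lemma dd_lower (S : Finset ℤ) (x : ℤ) : x - 2 * S.card ≤ dd S x := by
  unfold dd
  have : iotaF S x ≤ S.card := Finset.card_filter_le _ _
  have : (iotaF S x : ℤ) ≤ (S.card : ℤ) := by exact_mod_cast this
  omega

lemma iota_eq_zero {S : Finset ℤ} {x : ℤ} (h : ∀ y ∈ S, x < y) : iotaF S x = 0 := by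
  unfold iotaF
  rw [Finset.card_eq_zero]
  ext y
  simp only [Finset.mem_filter, Finset.notMem_empty, iff_false, not_and]
  intro hy
  exact fun hyx => absurd (h y hy) (by omega)

/-- counting elements in `(a, c]`. -/
lemma count_split (S : Finset ℤ) {a c : ℤ} (h : a ≤ c) :
    (iotaF S c : ℤ) = iotaF S a + ((S.filter (fun y => a < y ∧ y ≤ c)).card : ℤ) := by
  unfold iotaF
  have he : S.filter (fun y => y ≤ c)
      = S.filter (fun y => y ≤ a) ∪ S.filter (fun y => a < y ∧ y ≤ c) := by
    ext y
    simp only [Finset.mem_union, Finset.mem_filter]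
    constructor
    · rintro ⟨hy, hyc⟩
      by_cases hya : y ≤ a
      · exact Or.inl ⟨hy, hya⟩
      · exact Or.inr ⟨hy, by omega, hyc⟩
    · rintro (⟨hy, hya⟩ | ⟨hy, h1, h2⟩)
      · exact ⟨hy, by omega⟩
      · exact ⟨hy, h2⟩
  have hd : Disjoint (S.filter (fun y => y ≤ a)) (S.filter (fun y => a < y ∧ y ≤ c)) := by
    rw [Finset.disjoint_left]
    rintro y hy1 hy2
    simp only [Finset.mem_filter] at hy1 hy2
    omega
  rw [he, Finset.card_union_of_disjoint hd]
  push_cast; ring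

lemma iota_eq_of_gap {S : Finset ℤ} {a c : ℤ} (h : a ≤ c)
    (hgap : ∀ z ∈ S, a < z → c < z) : iotaF S c = iotaF S a := by
  have hcs := count_split S h
  have he : S.filter (fun y => a < y ∧ y ≤ c) = ∅ := by
    rw [Finset.filter_eq_empty_iff]
    intro y hy hc
    exact absurd (hgap y hy hc.1) (by omega)
  rw [he] at hcs
  simp only [Finset.card_empty, Nat.cast_zero, add_zero] at hcs
  omega

/-- The fundamental crossing lemma. -/
lemma crossing {S : Finset ℤ} {a b c : ℤ} (ha : dd S a ≤ c) (hb : c < dd S b) (hab : a ≤ b) :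
    ∃ y, a < y ∧ y ≤ b ∧ dd S y = c + 1 ∧ y ∉ S ∧ ∀ x, a ≤ x → x < y → dd S x ≤ c := by
  classical
  have hinh : ∃ z : ℤ, a < z ∧ z ≤ b ∧ c < dd S z := by
    refine ⟨b, ?_, le_refl _, hb⟩
    rcases eq_or_lt_of_le hab with rfl | h
    · omega
    · exact h
  obtain ⟨y, ⟨hya, hyb, hyd⟩, hleast⟩ :=
    Int.exists_least_of_bdd (P := fun z => a < z ∧ z ≤ b ∧ c < dd S z) ⟨a, fun z hz => le_of_lt hz.1⟩ hinh
  have hbelow : ∀ x, a ≤ x → x < y → dd S x ≤ c := by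
    intro x hax hxy
    rcases eq_or_lt_of_le hax with rfl | h
    · exact ha
    · by_contra hc
      exact absurd (hleast x ⟨h, by omega, by omega⟩) (by omega)
  have hprev : dd S (y - 1) ≤ c := hbelow (y - 1) (by omega) (by omega)
  by_cases hyS : y ∈ S
  · have := dd_step_mem hyS
    omega
  · have := dd_step_not_mem hyS
    exact ⟨y, hya, hyb, by omega, hyS, hbelow⟩


lemma exists_tp (S : Finset ℤ) (j : ℤ) :
    ∃ t, j < t ∧ t ∉ S ∧ dd S t = dd S j + 1 ∧ ∀ x, j ≤ x → x < t → dd S x ≤ dd S j := by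
  have hb : dd S j < dd S (j + 2 * S.card + (dd S j - dd S j) + (j - dd S j) + 1) := by
    have h1 := dd_lower S (j + 2 * S.card + 0 + (j - dd S j) + 1)
    have h2 := dd_le_self S j
    simp only [sub_self] at *
    omega
  have hab : j ≤ j + 2 * S.card + (dd S j - dd S j) + (j - dd S j) + 1 := by
    have h2 := dd_le_self S j
    have : (0:ℤ) ≤ 2 * S.card := by positivity
    omega
  obtain ⟨y, h1, h2, h3, h4, h5⟩ := crossing (le_refl (dd S j)) hb hab
  exact ⟨y, h1, h4, h3, h5⟩

lemma exists_tm {S : Finset ℤ} {j : ℤ} (hj : j ∈ S) :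
    ∃ t, t < j ∧ t ∉ S ∧ dd S t = dd S j + 1 ∧
      ∀ x, t < x → x < j → dd S j + 1 ≤ dd S x ∧ (x ∉ S → dd S x ≠ dd S j + 1) := by
  classical
  set m := dd S j with hm
  have hdj1 : dd S (j - 1) = m + 1 := by have := dd_step_mem hj; omega
  -- the far-left point a₀ with dd S a₀ = a₀ ≤ m
  have hSne : S.Nonempty := ⟨j, hj⟩
  set a₀ : ℤ := min m (S.min' hSne - 1) with ha₀
  have ha₀d : dd S a₀ = a₀ := by
    have : iotaF S a₀ = 0 := by
      apply iota_eq_zero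
      intro y hy
      have := S.min'_le y hy
      omega
    unfold dd; rw [this]; push_cast; omega
  -- B : the candidates
  have hBinh : ∃ t : ℤ, t < j ∧ t ∉ S ∧ dd S t = m + 1 := by
    -- least element of A = {t < j, dd = m+1}
    obtain ⟨t₁, ⟨ht₁j, ht₁d⟩, ht₁least⟩ :=
      Int.exists_least_of_bdd (P := fun t => t < j ∧ dd S t = m + 1)
        ⟨m + 1, fun z hz => by have := dd_le_self S z; omega⟩ ⟨j - 1, by omega, hdj1⟩
    by_cases ht₁S : t₁ ∈ S
    · exfalso
      have hprev : dd S (t₁ - 1) = m + 2 := by have := dd_step_mem ht₁S; omega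
      have ha₀m : a₀ ≤ m := by omega
      have ha₀t : a₀ ≤ t₁ - 1 := by
        have := S.min'_le t₁ ht₁S
        have h2 := dd_le_self S t₁
        omega
      obtain ⟨y, hy1, hy2, hy3, hy4, hy5⟩ :=
        crossing (S := S) (a := a₀) (b := t₁ - 1) (c := m) (by omega) (by omega) ha₀t
      have : t₁ ≤ y := ht₁least y ⟨by omega, hy3⟩
      omega
    · exact ⟨t₁, ht₁j, ht₁S, ht₁d⟩
  obtain ⟨t, ⟨htj, htS, htd⟩, hgreat⟩ :=
    Int.exists_greatest_of_bdd (P := fun t => t < j ∧ t ∉ S ∧ dd S t = m + 1)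
      ⟨j, fun z hz => le_of_lt hz.1⟩ hBinh
  refine ⟨t, htj, htS, htd, ?_⟩
  intro x htx hxj
  constructor
  · by_contra hc
    push_neg at hc
    have hxj1 : x ≤ j - 1 := by omega
    rcases eq_or_lt_of_le hxj1 with rfl | hlt
    · omega
    · obtain ⟨y, hy1, hy2, hy3, hy4, hy5⟩ :=
        crossing (S := S) (a := x) (b := j - 1) (c := m) (by omega) (by omega) (by omega)
      have : y ≤ t := hgreat y ⟨by omega, hy4, hy3⟩
      omega
  · intro hxS hxd
    have : x ≤ t := hgreat x ⟨by omega, hxS, hxd⟩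
    omega


lemma cond_iff (S : Finset ℤ) (u v : ℤ) :
    u - v < 2 * ((iotaF S u : ℤ) - (iotaF S v : ℤ)) ↔ dd S u < dd S v := by
  unfold dd; omega

lemma tauP_eq {S : Finset ℤ} {j t : ℤ} (hj : j ∈ S) (hjt : j < t) (htS : t ∉ S)
    (htd : dd S t = dd S j + 1) (hbet : ∀ x, j ≤ x → x < t → dd S x ≤ dd S j) :
    tauP S j = t := by
  classical
  set F := S.filter (fun j' => j ≤ j' ∧ ∀ j'' ∈ S, j < j'' → j'' ≤ j' →
      j'' - j < 2 * ((iotaF S j'' : ℤ) - (iotaF S j : ℤ))) with hF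
  have hjF : j ∈ F := by
    rw [hF, Finset.mem_filter]
    exact ⟨hj, le_refl _, fun j'' h1 h2 h3 => absurd (le_trans h3 (le_refl j)) (by omega)⟩
  have hFne : F.Nonempty := ⟨j, hjF⟩
  set σ := F.max' hFne with hσ
  have hσF : σ ∈ F := F.max'_mem hFne
  rw [hF, Finset.mem_filter] at hσF
  obtain ⟨hσS, hjσ, hσcond⟩ := hσF
  have hσcond' : ∀ j'' ∈ S, j < j'' → j'' ≤ σ → dd S j'' < dd S j := by
    intro u hu h1 h2
    exact (cond_iff S u j).mp (hσcond u hu h1 h2)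
  have hσt : σ < t := by
    by_contra hc
    push_neg at hc
    have htσ : t < σ := by
      rcases eq_or_lt_of_le hc with rfl | h
      · exact absurd hσS htS
      · exact h
    obtain ⟨y, ⟨hyS, hty, hyσ⟩, hyleast⟩ :=
      Int.exists_least_of_bdd (P := fun z => z ∈ S ∧ t < z ∧ z ≤ σ)
        ⟨t, fun z hz => le_of_lt hz.2.1⟩ ⟨σ, hσS, htσ, le_refl _⟩
    have hgap : iotaF S (y - 1) = iotaF S t := by
      apply iota_eq_of_gap (by omega)
      intro z hz htz
      by_cases hzσ : z ≤ σ
      · have := hyleast z ⟨hz, htz, hzσ⟩; omega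
      · omega
    have hdy1 : dd S (y - 1) = dd S t + (y - 1 - t) := by
      unfold dd at *; rw [hgap]; omega
    have hdy : dd S y = dd S (y - 1) - 1 := dd_step_mem hyS
    have := hσcond' y hyS (by omega) hyσ
    omega
  have hgap2 : iotaF S t = iotaF S σ := by
    apply iota_eq_of_gap (le_of_lt hσt)
    intro z hz hσz
    by_contra hzc
    push_neg at hzc
    have hzt : z < t := by
      rcases eq_or_lt_of_le hzc with rfl | h
      · exact absurd hz htS
      · exact h
    have hzF : z ∈ F := by
      rw [hF, Finset.mem_filter]
      refine ⟨hz, by omega, ?_⟩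
      intro u hu h1 h2
      rw [cond_iff]
      have hd := dd_step_mem hu
      have := hbet (u - 1) (by omega) (by omega)
      omega
    have := F.le_max' z hzF
    omega
  have hσmax : sigmaP S j = σ := by
    show WithBot.unbotD j F.max = σ
    rw [← Finset.coe_max' hFne, WithBot.unbotD_coe]
  unfold tauP
  rw [hσmax, ← hgap2]
  unfold dd at htd
  omega

lemma tauM_eq {S : Finset ℤ} {j t : ℤ} (hj : j ∈ S) (hjt : t < j) (htS : t ∉ S)
    (htd : dd S t = dd S j + 1) (hbet : ∀ x, t < x → x < j → dd S j + 1 ≤ dd S x) :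
    tauM S j = t := by
  classical
  set F := S.filter (fun j' => j' ≤ j ∧ ∀ j'' ∈ S, j' ≤ j'' → j'' < j →
      j - j'' < 2 * ((iotaF S j : ℤ) - (iotaF S j'' : ℤ))) with hF
  have hjF : j ∈ F := by
    rw [hF, Finset.mem_filter]
    exact ⟨hj, le_refl _, fun j'' h1 h2 h3 => absurd h2 (by omega)⟩
  have hFne : F.Nonempty := ⟨j, hjF⟩
  set σ := F.min' hFne with hσ
  have hσF : σ ∈ F := F.min'_mem hFne
  rw [hF, Finset.mem_filter] at hσF
  obtain ⟨hσS, hσj, hσcond⟩ := hσF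
  have hσcond' : ∀ j'' ∈ S, σ ≤ j'' → j'' < j → dd S j < dd S j'' := by
    intro u hu h1 h2
    exact (cond_iff S j u).mp (hσcond u hu h1 h2)
  have htσ : t < σ := by
    by_contra hc
    push_neg at hc
    have hσt : σ < t := by
      rcases eq_or_lt_of_le hc with rfl | h
      · exact absurd hσS htS
      · exact h
    obtain ⟨y, ⟨hyS, hσy, hyt⟩, hygr⟩ :=
      Int.exists_greatest_of_bdd (P := fun z => z ∈ S ∧ σ ≤ z ∧ z < t)
        ⟨t, fun z hz => le_of_lt hz.2.2⟩ ⟨σ, hσS, le_refl _, hσt⟩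
    have hgap : iotaF S t = iotaF S y := by
      apply iota_eq_of_gap (by omega)
      intro z hz hyz
      by_contra hzc
      push_neg at hzc
      rcases eq_or_lt_of_le hzc with rfl | h
      · exact htS hz
      · have := hygr z ⟨hz, by omega, h⟩; omega
    have hdy : dd S y = dd S t - (t - y) := by
      unfold dd at *; rw [hgap] at *; omega
    have := hσcond' y hyS hσy (by omega)
    omega
  have hgap2 : iotaF S (σ - 1) = iotaF S t := by
    apply iota_eq_of_gap (by omega)
    intro z hz htz
    by_contra hzc
    push_neg at hzc
    have hzσ : z < σ := by omega
    have hzF : z ∈ F := by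
      rw [hF, Finset.mem_filter]
      refine ⟨hz, by omega, ?_⟩
      intro u hu h1 h2
      rw [cond_iff]
      have := hbet u (by omega) h2
      omega
    have := F.min'_le z hzF
    omega
  have hισ : (iotaF S σ : ℤ) = iotaF S t + 1 := by
    rw [iota_step S σ, if_pos hσS, hgap2]
    push_cast; ring
  have hσmin : sigmaM S j = σ := by
    show WithTop.untopD j F.min = σ
    rw [← Finset.coe_min' hFne, WithTop.untopD_coe]
  unfold tauM
  rw [hσmin, hισ]
  unfold dd at htd
  omega


lemma mem_symmd {S T : Finset ℤ} {x : ℤ} :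
    x ∈ symmd S T ↔ ((x ∈ S ∧ x ∉ T) ∨ (x ∉ S ∧ x ∈ T)) := by
  unfold symmd
  simp only [Finset.mem_union, Finset.mem_sdiff]
  tauto

lemma iota_symmd (S T : Finset ℤ) (x : ℤ) :
    (iotaF (symmd S T) x : ℤ) + 2 * (((S ∩ T).filter (fun y => y ≤ x)).card : ℤ)
      = iotaF S x + iotaF T x := by
  classical
  set A := S.filter (fun y => y ≤ x) with hA
  set B := T.filter (fun y => y ≤ x) with hB
  have h1 : (symmd S T).filter (fun y => y ≤ x) = (A \ B) ∪ (B \ A) := by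
    ext y
    simp only [hA, hB, Finset.mem_union, Finset.mem_sdiff, Finset.mem_filter, mem_symmd]
    tauto
  have h2 : (S ∩ T).filter (fun y => y ≤ x) = A ∩ B := by
    ext y
    simp only [hA, hB, Finset.mem_inter, Finset.mem_filter, Finset.mem_inter]
    tauto
  have hd : Disjoint (A \ B) (B \ A) := disjoint_sdiff_sdiff
  have e1 := Finset.card_inter_add_card_sdiff A B
  have e2 := Finset.card_inter_add_card_sdiff B A
  have e3 : (B ∩ A).card = (A ∩ B).card := by rw [Finset.inter_comm]
  show ((iotaF (symmd S T) x : ℕ) : ℤ) + _ = ((iotaF S x : ℕ) : ℤ) + ((iotaF T x : ℕ) : ℤ)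
  unfold iotaF
  rw [h1, h2, Finset.card_union_of_disjoint hd, ← hA, ← hB]
  push_cast
  omega

lemma icc_filter (a b x : ℤ) : (Finset.Icc a b).filter (fun y => y ≤ x)
    = Finset.Icc a (min b x) := by
  ext y
  simp only [Finset.mem_filter, Finset.mem_Icc, le_min_iff]
  omega

lemma inter_icc_filter (S : Finset ℤ) (a b x : ℤ) :
    ((S ∩ Finset.Icc a b).filter (fun y => y ≤ x))
      = S.filter (fun y => (a - 1) < y ∧ y ≤ min b x) := by
  ext y
  simp only [Finset.mem_filter, Finset.mem_inter, Finset.mem_Icc, le_min_iff]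
  constructor
  · rintro ⟨⟨h1, h2, h3⟩, h4⟩; exact ⟨h1, by omega, h3, h4⟩
  · rintro ⟨h1, h2, h3, h4⟩; exact ⟨⟨h1, by omega, h3⟩, by omega⟩

lemma iota_symmd_left {S : Finset ℤ} {a b x : ℤ} (hx : x < a) :
    iotaF (symmd S (Finset.Icc a b)) x = iotaF S x := by
  have := iota_symmd S (Finset.Icc a b) x
  have h1 : iotaF (Finset.Icc a b) x = 0 := by
    apply iota_eq_zero
    intro y hy
    simp only [Finset.mem_Icc] at hy
    omega
  have h2 : ((S ∩ Finset.Icc a b).filter (fun y => y ≤ x)) = ∅ := by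
    rw [Finset.filter_eq_empty_iff]
    intro y hy
    simp only [Finset.mem_inter, Finset.mem_Icc] at hy
    omega
  rw [h1, h2] at this
  simp only [Finset.card_empty, Nat.cast_zero, mul_zero, add_zero] at this
  omega

lemma iota_symmd_mid {S : Finset ℤ} {a b x : ℤ} (hax : a ≤ x) (hxb : x ≤ b) :
    (iotaF (symmd S (Finset.Icc a b)) x : ℤ)
      = 2 * (iotaF S (a - 1) : ℤ) + (x + 1 - a) - iotaF S x := by
  have key := iota_symmd S (Finset.Icc a b) x
  have h1 : (iotaF (Finset.Icc a b) x : ℤ) = x + 1 - a := by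
    unfold iotaF
    rw [icc_filter, min_eq_right hxb, Int.card_Icc]
    omega
  have h2 : (((S ∩ Finset.Icc a b).filter (fun y => y ≤ x)).card : ℤ)
      = (iotaF S x : ℤ) - iotaF S (a - 1) := by
    rw [inter_icc_filter, min_eq_right hxb]
    have := count_split S (a := a - 1) (c := x) (by omega)
    omega
  rw [h1] at key
  omega

lemma iota_symmd_right {S : Finset ℤ} {a b x : ℤ} (hab : a ≤ b) (hbx : b < x)
    (hbal : b + 1 - a = 2 * ((iotaF S b : ℤ) - iotaF S (a - 1))) :
    iotaF (symmd S (Finset.Icc a b)) x = iotaF S x := by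
  have key := iota_symmd S (Finset.Icc a b) x
  have h1 : (iotaF (Finset.Icc a b) x : ℤ) = b + 1 - a := by
    unfold iotaF
    rw [icc_filter, min_eq_left (by omega), Int.card_Icc]
    omega
  have h2 : (((S ∩ Finset.Icc a b).filter (fun y => y ≤ x)).card : ℤ)
      = (iotaF S b : ℤ) - iotaF S (a - 1) := by
    rw [inter_icc_filter, min_eq_left (by omega)]
    have := count_split S (a := a - 1) (c := b) (by omega)
    omega
  rw [h1, h2] at key
  omega

lemma suppm_mem {m : ℤ} {S : Finset ℤ} {x : ℤ} :
    x ∈ suppm m S ↔ x ∈ S ∧ dd S x = m := by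
  unfold suppm dd
  rw [Finset.mem_filter]
  constructor
  · rintro ⟨h1, h2⟩; exact ⟨h1, by omega⟩
  · rintro ⟨h1, h2⟩; exact ⟨h1, by omega⟩


lemma plus_side {S : Finset ℤ} {j m : ℤ} (hj : j ∈ S) (hdj : dd S j = m) :
    tauP S j ∈ suppm (m + 1) (opP S j) ∧
    suppm (m + 1) (opP S j) = insert (tauP S j) (suppm (m + 1) S) ∧
    tauP S j ∉ suppm (m + 1) S ∧
    suppm m (opP S j) = (suppm m S).erase j ∧
    tauM (opP S j) (tauP S j) = j := by
  obtain ⟨t, hjt, htS, htd, hbet⟩ := exists_tp S j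
  rw [hdj] at htd hbet
  have htau : tauP S j = t := tauP_eq hj hjt htS (by omega) (fun x h1 h2 => by
    have := hbet x h1 h2; omega)
  have hSop : opP S j = symmd S (Finset.Icc j t) := by
    rw [opP, htau, itv, min_eq_left (le_of_lt hjt), max_eq_right (le_of_lt hjt)]
  set T := symmd S (Finset.Icc j t) with hT
  have hij : (iotaF S j : ℤ) = iotaF S (j - 1) + 1 := by
    rw [iota_step S j, if_pos hj]; push_cast; ring
  have hddj : dd S j = m := hdj
  have hbal : t + 1 - j = 2 * ((iotaF S t : ℤ) - iotaF S (j - 1)) := by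
    unfold dd at htd hdj
    omega
  have hmid : ∀ x, j ≤ x → x ≤ t → dd T x = 2 * m + 2 - dd S x := by
    intro x h1 h2
    unfold dd
    rw [hT, iota_symmd_mid h1 h2]
    unfold dd at hdj
    omega
  have hleft : ∀ x, x < j → dd T x = dd S x := by
    intro x h1
    unfold dd
    rw [hT, iota_symmd_left h1]
  have hright : ∀ x, t < x → dd T x = dd S x := by
    intro x h1
    unfold dd
    rw [hT, iota_symmd_right (le_of_lt hjt) h1 hbal]
  have hmem : ∀ x : ℤ, x ∈ T ↔ ((x ∈ S ∧ ¬(j ≤ x ∧ x ≤ t)) ∨ (x ∉ S ∧ (j ≤ x ∧ x ≤ t))) := by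
    intro x
    rw [hT, mem_symmd]
    simp only [Finset.mem_Icc]
  have hddTt : dd T t = m + 1 := by rw [hmid t (le_of_lt hjt) (le_refl t)]; omega
  have htT : t ∈ T := (hmem t).mpr (Or.inr ⟨htS, le_of_lt hjt, le_refl t⟩)
  have hjT : j ∉ T := by
    intro h
    rcases (hmem j).mp h with ⟨_, hn⟩ | ⟨hn, _⟩
    · exact hn ⟨le_refl j, le_of_lt hjt⟩
    · exact hn hj
  rw [htau, hSop]
  refine ⟨suppm_mem.mpr ⟨htT, hddTt⟩, ?_, ?_, ?_, ?_⟩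
  · ext x
    rw [suppm_mem, Finset.mem_insert, suppm_mem]
    by_cases hx1 : x < j
    · have h1 := hleft x hx1
      have h2 := (hmem x)
      constructor
      · rintro ⟨ha, hb⟩
        exact Or.inr ⟨(h2.mp ha).elim (fun h => h.1) (fun h => by omega), by omega⟩
      · rintro (rfl | ⟨ha, hb⟩)
        · omega
        · exact ⟨h2.mpr (Or.inl ⟨ha, by omega⟩), by omega⟩
    · by_cases hx2 : t < x
      · have h1 := hright x hx2
        have h2 := (hmem x)
        constructor
        · rintro ⟨ha, hb⟩
          exact Or.inr ⟨(h2.mp ha).elim (fun h => h.1) (fun h => by omega), by omega⟩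
        · rintro (rfl | ⟨ha, hb⟩)
          · omega
          · exact ⟨h2.mpr (Or.inl ⟨ha, by omega⟩), by omega⟩
      · -- j ≤ x ≤ t
        push_neg at hx1 hx2
        have h1 := hmid x hx1 hx2
        have h2 := (hmem x)
        constructor
        · rintro ⟨ha, hb⟩
          rcases (h2.mp ha) with h | h
          · omega
          · -- x ∉ S, dd S x = m+1 : forces x = t
            rcases eq_or_lt_of_le hx2 with rfl | hlt
            · exact Or.inl rfl
            · have := hbet x hx1 hlt; omega
        · rintro (rfl | ⟨ha, hb⟩)
          · exact ⟨htT, hddTt⟩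
          · exfalso
            rcases eq_or_lt_of_le hx2 with rfl | hlt
            · exact htS ha
            · have := hbet x hx1 hlt; omega
  · rw [suppm_mem]
    rintro ⟨h1, _⟩
    exact htS h1
  · ext x
    rw [suppm_mem, Finset.mem_erase, suppm_mem]
    by_cases hx1 : x < j
    · have h1 := hleft x hx1
      have h2 := (hmem x)
      constructor
      · rintro ⟨ha, hb⟩
        exact ⟨by omega, (h2.mp ha).elim (fun h => h.1) (fun h => by omega), by omega⟩
      · rintro ⟨hne, ha, hb⟩
        exact ⟨h2.mpr (Or.inl ⟨ha, by omega⟩), by omega⟩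
    · by_cases hx2 : t < x
      · have h1 := hright x hx2
        have h2 := (hmem x)
        constructor
        · rintro ⟨ha, hb⟩
          exact ⟨by omega, (h2.mp ha).elim (fun h => h.1) (fun h => by omega), by omega⟩
        · rintro ⟨hne, ha, hb⟩
          exact ⟨h2.mpr (Or.inl ⟨ha, by omega⟩), by omega⟩
      · push_neg at hx1 hx2
        have h1 := hmid x hx1 hx2
        have h2 := (hmem x)
        constructor
        · rintro ⟨ha, hb⟩
          exfalso
          rcases (h2.mp ha) with h | h
          · omega
          · rcases eq_or_lt_of_le hx2 with rfl | hlt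
            · omega
            · have := hbet x hx1 hlt; omega
        · rintro ⟨hne, ha, hb⟩
          exfalso
          have hxj : j < x := by omega
          have hxt : x < t := by
            rcases eq_or_lt_of_le hx2 with rfl | hlt
            · exact absurd ha htS
            · exact hlt
          have hstep := dd_step_mem ha
          have := hbet (x - 1) (by omega) (by omega)
          omega
  · apply tauM_eq htT hjt hjT
    · rw [hddTt, hmid j (le_refl j) (le_of_lt hjt)]
      omega
    · intro x h1 h2
      rw [hddTt, hmid x (by omega) (by omega)]
      have := hbet x (by omega) h2
      omega


lemma minus_side {S : Finset ℤ} {j m : ℤ} (hj : j ∈ S) (hdj : dd S j = m) :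
    tauM S j ∈ suppm (m - 1) (opM S j) ∧
    suppm (m - 1) (opM S j) = insert (tauM S j) (suppm (m - 1) S) ∧
    tauM S j ∉ suppm (m - 1) S ∧
    suppm m (opM S j) = (suppm m S).erase j ∧
    tauP (opM S j) (tauM S j) = j := by
  obtain ⟨t, htj, htS, htd, hbet⟩ := exists_tm hj
  rw [hdj] at htd hbet
  have htau : tauM S j = t := tauM_eq hj htj htS (by omega) (fun x h1 h2 => by
    have := (hbet x h1 h2).1; omega)
  have hSop : opM S j = symmd S (Finset.Icc t j) := by
    rw [opM, htau, itv, min_eq_right (le_of_lt htj), max_eq_left (le_of_lt htj)]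
  set T := symmd S (Finset.Icc t j) with hT
  have hit : (iotaF S t : ℤ) = iotaF S (t - 1) := by
    rw [iota_step S t, if_neg htS]; push_cast; ring
  have hbal : j + 1 - t = 2 * ((iotaF S j : ℤ) - iotaF S (t - 1)) := by
    unfold dd at htd hdj
    omega
  have hmid : ∀ x, t ≤ x → x ≤ j → dd T x = 2 * m - dd S x := by
    intro x h1 h2
    unfold dd
    rw [hT, iota_symmd_mid h1 h2]
    unfold dd at htd
    omega
  have hleft : ∀ x, x < t → dd T x = dd S x := by
    intro x h1
    unfold dd
    rw [hT, iota_symmd_left h1]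
  have hright : ∀ x, j < x → dd T x = dd S x := by
    intro x h1
    unfold dd
    rw [hT, iota_symmd_right (le_of_lt htj) h1 hbal]
  have hmem : ∀ x : ℤ, x ∈ T ↔ ((x ∈ S ∧ ¬(t ≤ x ∧ x ≤ j)) ∨ (x ∉ S ∧ (t ≤ x ∧ x ≤ j))) := by
    intro x
    rw [hT, mem_symmd]
    simp only [Finset.mem_Icc]
  have hddTt : dd T t = m - 1 := by rw [hmid t (le_refl t) (le_of_lt htj)]; omega
  have htT : t ∈ T := (hmem t).mpr (Or.inr ⟨htS, le_refl t, le_of_lt htj⟩)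
  have hjT : j ∉ T := by
    intro h
    rcases (hmem j).mp h with ⟨_, hn⟩ | ⟨hn, _⟩
    · exact hn ⟨le_of_lt htj, le_refl j⟩
    · exact hn hj
  rw [htau, hSop]
  refine ⟨suppm_mem.mpr ⟨htT, hddTt⟩, ?_, ?_, ?_, ?_⟩
  · ext x
    rw [suppm_mem, Finset.mem_insert, suppm_mem]
    by_cases hx1 : x < t
    · have h1 := hleft x hx1
      have h2 := (hmem x)
      constructor
      · rintro ⟨ha, hb⟩
        exact Or.inr ⟨(h2.mp ha).elim (fun h => h.1) (fun h => by omega), by omega⟩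
      · rintro (rfl | ⟨ha, hb⟩)
        · omega
        · exact ⟨h2.mpr (Or.inl ⟨ha, by omega⟩), by omega⟩
    · by_cases hx2 : j < x
      · have h1 := hright x hx2
        have h2 := (hmem x)
        constructor
        · rintro ⟨ha, hb⟩
          exact Or.inr ⟨(h2.mp ha).elim (fun h => h.1) (fun h => by omega), by omega⟩
        · rintro (rfl | ⟨ha, hb⟩)
          · omega
          · exact ⟨h2.mpr (Or.inl ⟨ha, by omega⟩), by omega⟩
      · -- t ≤ x ≤ j
        push_neg at hx1 hx2
        have h1 := hmid x hx1 hx2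
        have h2 := (hmem x)
        constructor
        · rintro ⟨ha, hb⟩
          rcases (h2.mp ha) with h | h
          · omega
          · -- x ∉ S, dd S x = m + 1 : forces x = t
            rcases eq_or_lt_of_le hx1 with rfl | hlt
            · exact Or.inl rfl
            · rcases eq_or_lt_of_le hx2 with rfl | hlt2
              · exact absurd hj h.1
              · have := (hbet x hlt hlt2).2 h.1
                omega
        · rintro (rfl | ⟨ha, hb⟩)
          · exact ⟨htT, hddTt⟩
          · exfalso
            rcases eq_or_lt_of_le hx1 with rfl | hlt
            · exact htS ha
            · rcases eq_or_lt_of_le hx2 with rfl | hlt2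
              · omega
              · have := (hbet x hlt hlt2).1
                omega
  · rw [suppm_mem]
    rintro ⟨h1, _⟩
    exact htS h1
  · ext x
    rw [suppm_mem, Finset.mem_erase, suppm_mem]
    by_cases hx1 : x < t
    · have h1 := hleft x hx1
      have h2 := (hmem x)
      constructor
      · rintro ⟨ha, hb⟩
        exact ⟨by omega, (h2.mp ha).elim (fun h => h.1) (fun h => by omega), by omega⟩
      · rintro ⟨hne, ha, hb⟩
        exact ⟨h2.mpr (Or.inl ⟨ha, by omega⟩), by omega⟩
    · by_cases hx2 : j < x
      · have h1 := hright x hx2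
        have h2 := (hmem x)
        constructor
        · rintro ⟨ha, hb⟩
          exact ⟨by omega, (h2.mp ha).elim (fun h => h.1) (fun h => by omega), by omega⟩
        · rintro ⟨hne, ha, hb⟩
          exact ⟨h2.mpr (Or.inl ⟨ha, by omega⟩), by omega⟩
      · push_neg at hx1 hx2
        have h1 := hmid x hx1 hx2
        have h2 := (hmem x)
        constructor
        · rintro ⟨ha, hb⟩
          exfalso
          rcases (h2.mp ha) with h | h
          · omega
          · -- x ∉ S, dd S x = m, t ≤ x ≤ j
            rcases eq_or_lt_of_le hx1 with rfl | hlt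
            · omega
            · rcases eq_or_lt_of_le hx2 with rfl | hlt2
              · exact h.1 hj
              · have := (hbet x hlt hlt2).1
                omega
        · rintro ⟨hne, ha, hb⟩
          exfalso
          have hxj : x < j := by omega
          rcases eq_or_lt_of_le hx1 with rfl | hlt
          · exact htS ha
          · have := (hbet x hlt hxj).1
            omega
  · apply tauP_eq htT htj hjT
    · rw [hddTt, hmid j (le_of_lt htj) (le_refl j)]
      omega
    · intro x h1 h2
      rw [hddTt]
      rcases eq_or_lt_of_le h1 with rfl | hlt
      · rw [hddTt]
      · rw [hmid x (by omega) (by omega)]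
        have := (hbet x hlt h2).1
        omega

end SuppAux
/-- for `m > 1` and `j ∈ supp_m(𝐧)`, for each sign `±`:
`τ^±(j) ∈ supp_{m±1}(𝐧^±(j))`; `supp_{m±1}(𝐧^±(j))` is the disjoint union of
`supp_{m±1}(𝐧)` and `{τ^±(j)}`; `supp_m(𝐧^±(j)) = supp_m(𝐧) \ {j}`; and
`τ^∓_{𝐧^±(j)}(τ^±_𝐧(j)) = j`. -/
theorem suppm_op_facts (m : ℤ) (hm : 1 < m) (S : Finset ℤ) (j : ℤ)
    (hj : j ∈ suppm m S) :
    (tauP S j ∈ suppm (m + 1) (opP S j) ∧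
     suppm (m + 1) (opP S j) = insert (tauP S j) (suppm (m + 1) S) ∧
     tauP S j ∉ suppm (m + 1) S ∧
     suppm m (opP S j) = (suppm m S).erase j ∧
     tauM (opP S j) (tauP S j) = j) ∧
    (tauM S j ∈ suppm (m - 1) (opM S j) ∧
     suppm (m - 1) (opM S j) = insert (tauM S j) (suppm (m - 1) S) ∧
     tauM S j ∉ suppm (m - 1) S ∧
     suppm m (opM S j) = (suppm m S).erase j ∧
     tauP (opM S j) (tauM S j) = j) := by
  obtain ⟨hjS, hdj⟩ := SuppAux.suppm_mem.mp hj
  exact ⟨SuppAux.plus_side hjS hdj, SuppAux.minus_side hjS hdj⟩
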